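/- Let n ≥ 1, let M = ⊕_{i=1}^{n} k_{S_i} and N = ⊕_{j=1}^{n} k_{T_j} be direct sums of exactly n staircase modules each, and let ε ≥ 0. Then any morphism f : M → N with ε-trivial cokernel is injective (i.e., every f_p is injective). -/

import Mathlib

structure PersMod (F : Type) [Field F] where
  space : ℝ × ℝ → Type
  [isACG : ∀ p, AddCommGroup (space p)]
  [isMod : ∀ p, Module F (space p)]
  map : ∀ {p q : ℝ × ℝ}, p ≤ q → (space p →ₗ[F] space q)
  map_id : ∀ p : ℝ × ℝ, map (le_refl p) = LinearMap.id
  map_comp : ∀ {p q r : ℝ × ℝ} (hpq : p ≤ q) (hqr : q ≤ r),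
      map hqr ∘ₗ map hpq = map (le_trans hpq hqr)

attribute [instance] PersMod.isACG PersMod.isMod

variable {F : Type} [Field F]

/-- `f` is a morphism of persistence modules `M → N`. -/
def IsHom (M N : PersMod F) (f : ∀ p, M.space p →ₗ[F] N.space p) : Prop :=
  ∀ ⦃p q : ℝ × ℝ⦄ (h : p ≤ q), N.map h ∘ₗ f p = f q ∘ₗ M.map h

/-- `f` is a morphism of persistence modules `M → N^ε` (the `ε`-shift of `N`). -/
def IsHomShift (M N : PersMod F) (ε : ℝ)
    (f : ∀ p : ℝ × ℝ, M.space p →ₗ[F] N.space (p + (ε, ε))) : Prop :=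
  ∀ ⦃p q : ℝ × ℝ⦄ (h : p ≤ q),
    N.map (add_le_add h (le_refl ((ε : ℝ), (ε : ℝ)))) ∘ₗ f p = f q ∘ₗ M.map h

/-- `(f, g)` is an `ε`-interleaving between `M` and `N`. -/
def IsInterleaving (M N : PersMod F) (ε : ℝ)
    (f : ∀ p : ℝ × ℝ, M.space p →ₗ[F] N.space (p + (ε, ε)))
    (g : ∀ p : ℝ × ℝ, N.space p →ₗ[F] M.space (p + (ε, ε))) : Prop :=
  IsHomShift M N ε f ∧ IsHomShift N M ε g ∧
  (∀ (p : ℝ × ℝ) (h : p ≤ p + (ε, ε) + (ε, ε)), g (p + (ε, ε)) ∘ₗ f p = M.map h) ∧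
  (∀ (p : ℝ × ℝ) (h : p ≤ p + (ε, ε) + (ε, ε)), f (p + (ε, ε)) ∘ₗ g p = N.map h)

def upset (a : ℝ × ℝ) : Set (ℝ × ℝ) := {x | a ≤ x}

def IsStaircase (S : Set (ℝ × ℝ)) : Prop :=
  ∃ A : Finset (ℝ × ℝ), A.Nonempty ∧ S = ⋃ a ∈ A, upset a

def UpClosed (U : Set (ℝ × ℝ)) : Prop :=
  ∀ ⦃p q : ℝ × ℝ⦄, p ≤ q → p ∈ U → q ∈ U

theorem IsStaircase.upClosed {S : Set (ℝ × ℝ)} (hS : IsStaircase S) : UpClosed S := by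
  obtain ⟨A, -, rfl⟩ := hS
  intro p q hpq hp
  simp only [Set.mem_iUnion] at hp ⊢
  obtain ⟨a, ha, hpa⟩ := hp
  exact ⟨a, ha, le_trans hpa hpq⟩

open Classical in
/-- The fiber of the staircase module over `U` at `p` : `F` if `p ∈ U`, else `0`,
realized as a submodule of `F`. -/
noncomputable def lineAt (F : Type) [Field F] (U : Set (ℝ × ℝ)) (p : ℝ × ℝ) :
    Submodule F F :=
  if p ∈ U then ⊤ else ⊥

/-- The interval (staircase) module `k_U` of an upward closed set `U`. -/
noncomputable def stairMod (F : Type) [Field F] (U : Set (ℝ × ℝ)) (hU : UpClosed U) :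
    PersMod F where
  space p := ↥(lineAt F U p)
  map {p q} h := Submodule.inclusion (by
    by_cases hp : p ∈ U
    · simp [lineAt, hp, hU h hp]
    · simp [lineAt, hp])
  map_id p := rfl
  map_comp _ _ := rfl

/-- The element `1 ∈ F = (k_U)_p` for `p ∈ U`. -/
noncomputable def unitVec (F : Type) [Field F] (U : Set (ℝ × ℝ)) (p : ℝ × ℝ)
    (hp : p ∈ U) : ↥(lineAt F U p) :=
  ⟨1, by simp [lineAt, hp]⟩

/-- The value in `F` of an element of the fiber of `k_U` at `p`. -/
noncomputable def valAt (F : Type) [Field F] (U : Set (ℝ × ℝ)) (p : ℝ × ℝ) :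
    ↥(lineAt F U p) →ₗ[F] F :=
  (lineAt F U p).subtype

/-- Finite direct sums of persistence modules, defined pointwise. -/
noncomputable def dirSum {n : ℕ} (Ms : Fin n → PersMod F) : PersMod F where
  space p := ∀ i, (Ms i).space p
  map h := LinearMap.pi fun i => (Ms i).map h ∘ₗ LinearMap.proj i
  map_id p := by
    refine LinearMap.ext fun x => funext fun i => ?_
    simp [(Ms i).map_id]
  map_comp hpq hqr := by
    refine LinearMap.ext fun x => funext fun i => ?_
    simpa using LinearMap.congr_fun ((Ms i).map_comp hpq hqr) (x i)

/-- Direct sum of staircase modules. -/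
noncomputable def stairSum (F : Type) [Field F] {n : ℕ} (S : Fin n → Set (ℝ × ℝ))
    (hS : ∀ i, UpClosed (S i)) : PersMod F :=
  dirSum fun i => stairMod F (S i) (hS i)

/-- The `ε`-shift `S^ε = {x - (ε,ε) : x ∈ S}` of a set. -/
def shiftSet (S : Set (ℝ × ℝ)) (ε : ℝ) : Set (ℝ × ℝ) := {x | x + (ε, ε) ∈ S}

/-- The directed shift distance `d_s(S,T) = min {ε ≥ 0 : S ⊆ T^ε}`. -/
noncomputable def dirDist (S T : Set (ℝ × ℝ)) : ℝ :=
  sInf {ε : ℝ | 0 ≤ ε ∧ S ⊆ shiftSet T ε}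

/-- `M`, `N` are `ε`-interleaved. -/
def Interleaved (M N : PersMod F) (ε : ℝ) : Prop :=
  ∃ f g, IsInterleaving M N ε f g

/-- The interleaving distance. -/
noncomputable def interDist (M N : PersMod F) : ℝ :=
  sInf {ε : ℝ | 0 ≤ ε ∧ Interleaved M N ε}

/-- `S` has a finite generating set all of whose members are `≤ u`. -/
theorem upClosed_of_gens {S : Set (ℝ × ℝ)} {u : ℝ × ℝ}
    (h : ∃ A : Finset (ℝ × ℝ), A.Nonempty ∧ S = (⋃ a ∈ A, upset a) ∧ ∀ a ∈ A, a ≤ u) :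
    UpClosed S := by
  obtain ⟨A, hne, hSeq, -⟩ := h
  exact IsStaircase.upClosed ⟨A, hne, hSeq⟩

theorem mem_of_gens {S : Set (ℝ × ℝ)} {u v : ℝ × ℝ}
    (h : ∃ A : Finset (ℝ × ℝ), A.Nonempty ∧ S = (⋃ a ∈ A, upset a) ∧ ∀ a ∈ A, a ≤ u)
    (huv : u ≤ v) : v ∈ S := by
  obtain ⟨A, ⟨a, ha⟩, rfl, hle⟩ := h
  exact Set.mem_biUnion ha (le_trans (hle a ha) huv)

/-- `f : M → N^ε` has `δ`-trivial kernel: the induced map `ker f_p → ker f_{p+(δ,δ)}`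
is zero for all `p`. -/
def TrivialKerS (M N : PersMod F) (ε δ : ℝ)
    (f : ∀ p, M.space p →ₗ[F] N.space (p + (ε, ε))) : Prop :=
  ∀ (p : ℝ × ℝ) (x : M.space p), f p x = 0 → ∀ h : p ≤ p + (δ, δ), M.map h x = 0

/-- `f : M → N^ε` has `δ`-trivial cokernel: the induced map
`coker f_p → coker f_{p+(δ,δ)}` is zero for all `p`. -/
def TrivialCokerS (M N : PersMod F) (ε δ : ℝ)
    (f : ∀ p, M.space p →ₗ[F] N.space (p + (ε, ε))) : Prop :=
  ∀ (p : ℝ × ℝ) (y : N.space (p + (ε, ε))) (h : p + (ε, ε) ≤ p + (δ, δ) + (ε, ε)),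
    ∃ x : M.space (p + (δ, δ)), f (p + (δ, δ)) x = N.map h y

/-- `f : M → N` has `δ`-trivial kernel. -/
def TrivialKer (M N : PersMod F) (δ : ℝ) (f : ∀ p, M.space p →ₗ[F] N.space p) : Prop :=
  ∀ (p : ℝ × ℝ) (x : M.space p), f p x = 0 → ∀ h : p ≤ p + (δ, δ), M.map h x = 0

/-- `f : M → N` has `δ`-trivial cokernel. -/
def TrivialCoker (M N : PersMod F) (δ : ℝ) (f : ∀ p, M.space p →ₗ[F] N.space p) : Prop :=
  ∀ (p : ℝ × ℝ) (y : N.space p) (h : p ≤ p + (δ, δ)),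
    ∃ x : M.space (p + (δ, δ)), f (p + (δ, δ)) x = N.map h y

/-- The interior of an upward closed subset of `ℝ²` is upward closed. -/
theorem upClosed_interior {U : Set (ℝ × ℝ)} (hU : UpClosed U) :
    UpClosed (interior U) := by
  intro p q hpq hp
  have hsub : (fun x : ℝ × ℝ => x - (q - p)) ⁻¹' interior U ⊆ U := fun x hx =>
    hU (sub_le_self x (sub_nonneg.mpr hpq)) (interior_subset hx)
  have hopen : IsOpen ((fun x : ℝ × ℝ => x - (q - p)) ⁻¹' interior U) :=
    isOpen_interior.preimage (continuous_id.sub continuous_const)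
  have hq : q ∈ (fun x : ℝ × ℝ => x - (q - p)) ⁻¹' interior U := by
    show q - (q - p) ∈ interior U
    rwa [sub_sub_cancel]
  exact interior_maximal hsub hopen hq

/-- The dual persistence module: `(M*)_p = (M_{-p})^∨`. -/
noncomputable def dualMod (M : PersMod F) : PersMod F where
  space p := Module.Dual F (M.space (-p))
  map {p q} h := (M.map (neg_le_neg h)).dualMap
  map_id p := by
    have h : M.map (neg_le_neg (le_refl p)) = LinearMap.id := M.map_id (-p)
    ext φ x
    simp [h]
  map_comp hpq hqr := by
    ext φ x
    have h := LinearMap.congr_fun (M.map_comp (neg_le_neg hqr) (neg_le_neg hpq)) x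
    simp only [LinearMap.comp_apply, LinearMap.dualMap_apply] at h ⊢
    rw [h]


section Aux

variable {F : Type} [Field F]

lemma stairSum_map_injective {n : ℕ} (S : Fin n → Set (ℝ × ℝ)) (hS : ∀ i, UpClosed (S i))
    {p q : ℝ × ℝ} (h : p ≤ q) : Function.Injective ((stairSum F S hS).map h) := by
  intro x y hxy
  let x' : ∀ i, ↥(lineAt F (S i) p) := x
  let y' : ∀ i, ↥(lineAt F (S i) p) := y
  let zx : ∀ i, ↥(lineAt F (S i) q) := (stairSum F S hS).map h x
  let zy : ∀ i, ↥(lineAt F (S i) q) := (stairSum F S hS).map h y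
  have hz : zx = zy := hxy
  show x' = y'
  funext i
  refine Subtype.ext ?_
  have : (zx i : F) = (zy i : F) := by rw [hz]
  exact this

lemma lineAt_eq_top {U : Set (ℝ × ℝ)} {p : ℝ × ℝ} (hp : p ∈ U) :
    lineAt F U p = ⊤ := if_pos hp

lemma finrank_stairSum {n : ℕ} (S : Fin n → Set (ℝ × ℝ)) (hS : ∀ i, UpClosed (S i))
    {q : ℝ × ℝ} (hq : ∀ i, q ∈ S i) :
    Module.finrank F ((stairSum F S hS).space q) = n := by
  show Module.finrank F (∀ i, ↥(lineAt F (S i) q)) = n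
  rw [Module.finrank_pi_fintype]
  have h1 : ∀ i : Fin n, Module.finrank F ↥(lineAt F (S i) q) = 1 := by
    intro i
    rw [lineAt_eq_top (hq i), finrank_top, Module.finrank_self]
  simp [h1]

instance stairSum_fd {n : ℕ} (S : Fin n → Set (ℝ × ℝ)) (hS : ∀ i, UpClosed (S i))
    (q : ℝ × ℝ) : FiniteDimensional F ((stairSum F S hS).space q) := by
  show FiniteDimensional F (∀ i, ↥(lineAt F (S i) q))
  infer_instance

end Aux

/-- **Morphisms with `ε`-trivial cokernel between sums of `n` staircase modules are
injective.** -/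
theorem stmt_15 (F : Type) [Field F] [Fintype F] (n : ℕ) (hn : 1 ≤ n)
    (S T : Fin n → Set (ℝ × ℝ))
    (hS : ∀ i, IsStaircase (S i)) (hT : ∀ j, IsStaircase (T j))
    (ε : ℝ) (hε : 0 ≤ ε)
    (f : ∀ p, (stairSum F S fun i => (hS i).upClosed).space p →ₗ[F]
              (stairSum F T fun j => (hT j).upClosed).space p)
    (hf : IsHom (stairSum F S fun i => (hS i).upClosed)
            (stairSum F T fun j => (hT j).upClosed) f)
    (hcok : TrivialCoker (stairSum F S fun i => (hS i).upClosed)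
            (stairSum F T fun j => (hT j).upClosed) ε f) :
    ∀ p : ℝ × ℝ, Function.Injective (f p) := by
  have hS' := hS
  have hT' := hT
  choose A hAne hSA using hS'
  choose B hBne hTB using hT'
  choose a ha using fun i => hAne i
  choose b hb using fun j => hBne j
  obtain ⟨u1, hu1⟩ := (Set.finite_range a).bddAbove
  obtain ⟨u2, hu2⟩ := (Set.finite_range b).bddAbove
  set u : ℝ × ℝ := u1 ⊔ u2 with hudef
  have hmemS : ∀ {q : ℝ × ℝ}, u ≤ q → ∀ i, q ∈ S i := by
    intro q hq i
    rw [hSA i]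
    exact Set.mem_biUnion (ha i)
      (le_trans (hu1 ⟨i, rfl⟩) (le_trans le_sup_left hq))
  have hmemT : ∀ {q : ℝ × ℝ}, u ≤ q → ∀ j, q ∈ T j := by
    intro q hq j
    rw [hTB j]
    exact Set.mem_biUnion (hb j)
      (le_trans (hu2 ⟨j, rfl⟩) (le_trans le_sup_right hq))
  have hee : (0 : ℝ × ℝ) ≤ ((ε : ℝ), (ε : ℝ)) := ⟨hε, hε⟩
  intro p
  set r : ℝ × ℝ := u ⊔ p with hrdef
  set q : ℝ × ℝ := r + ((ε : ℝ), (ε : ℝ)) with hqdef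
  have hrq : r ≤ q := le_add_of_nonneg_right hee
  have huq : u ≤ q := le_trans le_sup_left hrq
  have hpq : p ≤ q := le_trans le_sup_right hrq
  -- f q is surjective
  have hsurj : Function.Surjective (f q) := by
    intro y0
    let y0' : ∀ j, ↥(lineAt F (T j) q) := y0
    let yr : (stairSum F T fun j => (hT j).upClosed).space r := fun j =>
      (⟨(y0' j : F), by
        rw [lineAt_eq_top (hmemT (le_sup_left : u ≤ r) j)]; trivial⟩ :
        ↥(lineAt F (T j) r))
    obtain ⟨x, hx⟩ := hcok r yr hrq
    refine ⟨x, ?_⟩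
    let z : ∀ j, ↥(lineAt F (T j) q) :=
      (stairSum F T fun j => (hT j).upClosed).map hrq yr
    have hz : z = y0' := funext fun j => Subtype.ext rfl
    exact hx.trans hz
  -- f q is injective
  have hinj : Function.Injective (f q) := by
    rw [LinearMap.injective_iff_surjective_of_finrank_eq_finrank
      ((finrank_stairSum S (fun i => (hS i).upClosed) (hmemS huq)).trans
        (finrank_stairSum T (fun j => (hT j).upClosed) (hmemT huq)).symm)]
    exact hsurj
  -- conclude
  intro x y hxy
  apply stairSum_map_injective S (fun i => (hS i).upClosed) hpq
  apply hinj
  have h1 := LinearMap.congr_fun (hf hpq) x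
  have h2 := LinearMap.congr_fun (hf hpq) y
  simp only [LinearMap.comp_apply] at h1 h2
  rw [← h1, ← h2, hxy]
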